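/- arXiv:2005.06733 — 2 statements merged into one kernel-verified Lean document; each statement's English description precedes it below -/
import Mathlib

section
/- For every x ∈ ℝ³ with ‖x‖ ≤ π, the rotation error function evaluated at E = exp(hat(x)) satisfies 2 − √(1 + tr(exp(hat(x)))) = 4 · sin²(‖x‖/4). (In particular tr(exp(hat(x))) = 1 + 2 cos ‖x‖.) -/
open Matrix Real

/-- The hat map sending `x ∈ ℝ³` to the skew-symmetric matrix with `hat x *ᵥ y = x ×₃ y`. -/
def hat (x : Fin 3 → ℝ) : Matrix (Fin 3) (Fin 3) ℝ :=
  !![0, -x 2, x 1; x 2, 0, -x 0; -x 1, x 0, 0]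

/-- The Euclidean norm on ℝ³. -/
noncomputable def enorm3 (x : Fin 3 → ℝ) : ℝ := Real.sqrt (∑ i, x i ^ 2)

private lemma hat_cube (x : Fin 3 → ℝ) :
    hat x ^ 3 = (-(x 0 ^ 2 + x 1 ^ 2 + x 2 ^ 2)) • hat x := by
  have h3 : hat x ^ 3 = hat x * hat x * hat x := by
    rw [pow_succ, pow_succ, pow_one]
  rw [h3]
  ext i j
  fin_cases i <;> fin_cases j <;>
    simp [hat, Matrix.mul_apply, Fin.sum_univ_three, Matrix.smul_apply] <;> ring

private lemma trace_hat (x : Fin 3 → ℝ) : (hat x).trace = 0 := by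
  simp [hat, Matrix.trace, Fin.sum_univ_three]

private lemma trace_hat_sq (x : Fin 3 → ℝ) :
    (hat x ^ 2).trace = -2 * (x 0 ^ 2 + x 1 ^ 2 + x 2 ^ 2) := by
  have h2 : hat x ^ 2 = hat x * hat x := sq (hat x)
  rw [h2]
  simp [hat, Matrix.trace, Matrix.mul_apply, Fin.sum_univ_three, Matrix.diag]
  ring

private lemma hat_pow (x : Fin 3 → ℝ) (k : ℕ) :
    hat x ^ (2 * k + 1) = ((-(x 0 ^ 2 + x 1 ^ 2 + x 2 ^ 2)) ^ k) • hat x ∧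
      hat x ^ (2 * k + 2) = ((-(x 0 ^ 2 + x 1 ^ 2 + x 2 ^ 2)) ^ k) • (hat x ^ 2) := by
  set s : ℝ := x 0 ^ 2 + x 1 ^ 2 + x 2 ^ 2 with hs
  induction k with
  | zero => simp
  | succ k ih =>
    obtain ⟨h1, h2⟩ := ih
    constructor
    · have : hat x ^ (2 * (k + 1) + 1) = hat x ^ (2 * k + 1) * hat x ^ 2 := by
        rw [← pow_add]; congr 1
      rw [this, h1, smul_mul_assoc, ← pow_succ' (hat x) 2, hat_cube, smul_smul, ← pow_succ]
    · have : hat x ^ (2 * (k + 1) + 2) = hat x ^ (2 * k + 2) * hat x ^ 2 := by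
        rw [← pow_add]; congr 1
      rw [this, h2, smul_mul_assoc, ← pow_add]
      have h4 : hat x ^ (2 + 2) = (-s) • (hat x ^ 2) := by
        have : hat x ^ (2 + 2) = hat x ^ 3 * hat x := by
          rw [← pow_succ]
        rw [this, hat_cube, smul_mul_assoc, ← sq]
      rw [h4, smul_smul, mul_comm ((-s) ^ k) (-s), ← pow_succ']

/-- The attitude error function of `E = exp (hat x)` equals `4 sin² (‖x‖/4)` when `‖x‖ ≤ π`;
in particular `tr (exp (hat x)) = 1 + 2 cos ‖x‖`. -/
theorem error_function_exp_hat (x : Fin 3 → ℝ) (hx : enorm3 x ≤ Real.pi) :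
    (2 - Real.sqrt (1 + (NormedSpace.exp (hat x)).trace) =
        4 * Real.sin (enorm3 x / 4) ^ 2) ∧
      (NormedSpace.exp (hat x)).trace = 1 + 2 * Real.cos (enorm3 x) := by
  set s : ℝ := x 0 ^ 2 + x 1 ^ 2 + x 2 ^ 2 with hs
  have hs0 : 0 ≤ s := by positivity
  have hθdef : enorm3 x = Real.sqrt s := by
    rw [enorm3, Fin.sum_univ_three]
  set θ : ℝ := Real.sqrt s with hθ
  have hθ0 : 0 ≤ θ := Real.sqrt_nonneg s
  have hθ2 : θ ^ 2 = s := Real.sq_sqrt hs0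
  have hθπ : θ ≤ Real.pi := hθdef ▸ hx
  -- trace of the exponential
  have key : (NormedSpace.exp (hat x)).trace = 1 + 2 * Real.cos θ := by
    letI : SeminormedRing (Matrix (Fin 3) (Fin 3) ℝ) := Matrix.linftyOpSemiNormedRing
    letI : NormedRing (Matrix (Fin 3) (Fin 3) ℝ) := Matrix.linftyOpNormedRing
    letI : NormedAlgebra ℝ (Matrix (Fin 3) (Fin 3) ℝ) := Matrix.linftyOpNormedAlgebra
    have hsum := NormedSpace.expSeries_summable' (𝕂 := ℝ) (hat x)
    let trC := LinearMap.toContinuousLinearMap (Matrix.traceLinearMap (Fin 3) ℝ ℝ)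
    have h1 : (NormedSpace.exp (hat x)).trace
        = ∑' n : ℕ, ((n.factorial : ℝ)⁻¹ * ((hat x ^ n).trace)) := by
      rw [NormedSpace.exp_eq_tsum (𝕂 := ℝ)]
      have htr : ∀ A : Matrix (Fin 3) (Fin 3) ℝ, trC A = A.trace := fun _ => rfl
      have := trC.map_tsum (f := fun n : ℕ => ((n.factorial : ℝ)⁻¹) • hat x ^ n) hsum
      simpa [htr, Matrix.trace_smul, smul_eq_mul] using this
    rw [h1]
    -- the series
    have hF : HasSum (fun n : ℕ =>
        (if Even n then 2 * ((-1) ^ (n / 2) * θ ^ n / n.factorial) else 0)) (2 * Real.cos θ) := by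
      have hc : HasSum (fun k : ℕ => 2 * ((-1) ^ k * θ ^ (2 * k) / ((2*k).factorial)))
          (2 * Real.cos θ) := (Real.hasSum_cos θ).mul_left 2
      have hinj : Function.Injective (fun k : ℕ => 2 * k) :=
        mul_right_injective₀ two_ne_zero
      rw [← Function.Injective.hasSum_iff hinj (by
        intro n hn
        have : ¬ Even n := by
          rintro ⟨r, hr⟩
          exact hn ⟨r, by show 2 * r = n; omega⟩
        simp [this])]
      convert hc using 2 with k
      have : Even (2 * k) := ⟨k, by omega⟩
      simp [this, Nat.mul_div_cancel_left k (by norm_num : 0 < 2)]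
    have hD : HasSum (fun n : ℕ => (if n = 0 then (1 : ℝ) else 0)) 1 := hasSum_ite_eq 0 1
    have hG : HasSum (fun n : ℕ => ((n.factorial : ℝ)⁻¹ * ((hat x ^ n).trace))) (2 * Real.cos θ + 1) := by
      have := hF.add hD
      convert this using 1
      funext n
      rcases Nat.even_or_odd n with ⟨k, hk⟩ | ⟨k, hk⟩
      · rcases Nat.eq_zero_or_pos k with rfl | hkpos
        · subst hk
          norm_num [Matrix.trace_one]
        · obtain ⟨j, rfl⟩ := Nat.exists_eq_add_of_lt hkpos
          have hn : n = 2 * j + 2 := by omega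
          subst hn
          rw [(hat_pow x j).2, Matrix.trace_smul, trace_hat_sq, smul_eq_mul]
          have hev : Even (2 * j + 2) := ⟨j + 1, by omega⟩
          have hdiv : (2 * j + 2) / 2 = j + 1 := by omega
          rw [if_pos hev, hdiv, if_neg (by omega : ¬ 2 * j + 2 = 0)]
          rw [← hs, ← hθ2]
          have : θ ^ (2 * j + 2) = (θ ^ 2) ^ (j + 1) := by rw [← pow_mul]; ring_nf
          rw [this]
          field_simp
          ring
      · have hn : n = 2 * k + 1 := by omega
        subst hn
        rw [(hat_pow x k).1, Matrix.trace_smul, trace_hat, smul_eq_mul]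
        have hodd : ¬ Even (2 * k + 1) := by
          rintro ⟨r, hr⟩; omega
        simp [hodd]
    rw [hG.tsum_eq]; ring
  rw [hθdef]
  refine ⟨?_, key⟩
  rw [key]
  have hcos2 : Real.cos θ = 2 * Real.cos (θ / 2) ^ 2 - 1 := by
    have := Real.cos_two_mul (θ / 2)
    rw [show 2 * (θ / 2) = θ by ring] at this
    linarith
  have hc2nn : 0 ≤ Real.cos (θ / 2) :=
    Real.cos_nonneg_of_mem_Icc ⟨by linarith [Real.pi_pos], by linarith⟩
  have hsqrt : Real.sqrt (1 + (1 + 2 * Real.cos θ)) = 2 * Real.cos (θ / 2) := by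
    have : 1 + (1 + 2 * Real.cos θ) = (2 * Real.cos (θ / 2)) ^ 2 := by
      rw [hcos2]; ring
    rw [this, Real.sqrt_sq (by linarith)]
  rw [hsqrt]
  have hcos4 : Real.cos (θ / 2) = 2 * Real.cos (θ / 4) ^ 2 - 1 := by
    have := Real.cos_two_mul (θ / 4)
    rw [show 2 * (θ / 4) = θ / 2 by ring] at this
    linarith
  have hpyth := Real.sin_sq_add_cos_sq (θ / 4)
  nlinarith [hpyth]
end

section
/- Let R, R_d : ℝ → Matrix (Fin 3) (Fin 3) ℝ be differentiable curves taking values in SO(3), Ω, Ω_d : ℝ → ℝ³ differentiable with R'(t) = R(t)·hat(Ω(t)), R_d'(t) = R_d(t)·hat(Ω_d(t)), and tr(R_d(t)ᵀR(t)) > −1 for all t. Let P, F be 3×3 real matrices and J an invertible 3×3 real matrix, and set Ω_tar(t) = −P · e_R(t) + R(t)ᵀR_d(t)Ω_d(t). Then Ω_tar is differentiable with Ω_tar'(t) = −hat(Ω(t)) · R(t)ᵀR_d(t)Ω_d(t) + R(t)ᵀR_d(t)Ω_d'(t) − P · β(t) · e_Ω(t); and if moreover J · Ω'(t) = −Ω(t)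 × (J·Ω(t)) + q(t) where q(t) = Ω(t) × (J·Ω(t)) + J · Ω_tar'(t) − F · (Ω(t) − Ω_tar(t)), then the tracking error e(t) = Ω(t) − Ω_tar(t) satisfies the linear error dynamics J · e'(t) = −F · e(t). -/
open Matrix

/-- The vee map, inverse to `hat` on skew-symmetric matrices. -/
def vee (S : Matrix (Fin 3) (Fin 3) ℝ) : Fin 3 → ℝ :=
  ![S 2 1, S 0 2, S 1 0]

/-- The rotation error vector. -/
noncomputable def eR (R Rd : ℝ → Matrix (Fin 3) (Fin 3) ℝ) (t : ℝ) : Fin 3 → ℝ :=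
  (1 / (2 * Real.sqrt (1 + ((Rd t)ᵀ * R t).trace))) •
    vee ((Rd t)ᵀ * R t - (R t)ᵀ * Rd t)

/-- The angular velocity error vector. -/
def eΩ (R Rd : ℝ → Matrix (Fin 3) (Fin 3) ℝ) (Ω Ωd : ℝ → Fin 3 → ℝ) (t : ℝ) : Fin 3 → ℝ :=
  Ω t - ((R t)ᵀ * Rd t) *ᵥ Ωd t

/-- The matrix `β(t)` relating `e_R'` to `e_Ω`. -/
noncomputable def β (R Rd : ℝ → Matrix (Fin 3) (Fin 3) ℝ) (t : ℝ) :
    Matrix (Fin 3) (Fin 3) ℝ :=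
  (1 / (2 * Real.sqrt (1 + ((Rd t)ᵀ * R t).trace))) •
    (2 • vecMulVec (eR R Rd t) (eR R Rd t) +
      ((R t)ᵀ * Rd t).trace • (1 : Matrix (Fin 3) (Fin 3) ℝ) - (R t)ᵀ * Rd t)

/-- The target angular velocity `Ω_tar(t) = -P e_R(t) + R(t)ᵀ R_d(t) Ω_d(t)`. -/
noncomputable def Ωtar (P : Matrix (Fin 3) (Fin 3) ℝ)
    (R Rd : ℝ → Matrix (Fin 3) (Fin 3) ℝ) (Ωd : ℝ → Fin 3 → ℝ) (t : ℝ) : Fin 3 → ℝ :=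
  -(P *ᵥ eR R Rd t) + ((R t)ᵀ * Rd t) *ᵥ Ωd t

set_option maxHeartbeats 1000000

lemma hat_mulVec_self (x : Fin 3 → ℝ) : hat x *ᵥ x = 0 := by
  funext i; fin_cases i <;>
    simp [hat, mulVec, dotProduct, Fin.sum_univ_three] <;> ring

lemma vee_hat (x : Fin 3 → ℝ) : vee (hat x) = x := by
  funext i; fin_cases i <;> simp [hat, vee]

lemma hat_transpose (x : Fin 3 → ℝ) : (hat x)ᵀ = -hat x := by
  ext i j; fin_cases i <;> fin_cases j <;> simp [hat]

lemma hat_vee_sub (A : Matrix (Fin 3) (Fin 3) ℝ) : hat (vee (Aᵀ - A)) = Aᵀ - A := by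
  ext i j; fin_cases i <;> fin_cases j <;> simp [hat, vee] <;> ring

lemma adjugate_transpose_fin_three (A : Matrix (Fin 3) (Fin 3) ℝ) :
    (adjugate A)ᵀ =
    !![A 1 1 * A 2 2 - A 1 2 * A 2 1,
      -(A 1 0 * A 2 2) + A 1 2 * A 2 0,
      A 1 0 * A 2 1 - A 1 1 * A 2 0;
      -(A 0 1 * A 2 2) + A 0 2 * A 2 1,
      A 0 0 * A 2 2 - A 0 2 * A 2 0,
      -(A 0 0 * A 2 1) + A 0 1 * A 2 0;
      A 0 1 * A 1 2 - A 0 2 * A 1 1,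
      -(A 0 0 * A 1 2) + A 0 2 * A 1 0,
      A 0 0 * A 1 1 - A 0 1 * A 1 0] := by
  rw [Matrix.adjugate_fin_three]
  ext i j; fin_cases i <;> fin_cases j <;> rfl

lemma hat_mulVec_mul (A : Matrix (Fin 3) (Fin 3) ℝ) (x : Fin 3 → ℝ) :
    hat (A *ᵥ x) * A = (adjugate A)ᵀ * hat x := by
  rw [adjugate_transpose_fin_three]
  ext i j
  fin_cases i <;> fin_cases j <;>
    simp [hat, mulVec, dotProduct, Matrix.mul_apply, Fin.sum_univ_three] <;> ring

lemma trace_hat_comb (Q : Matrix (Fin 3) (Fin 3) ℝ) (w wd : Fin 3 → ℝ) :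
    (-(hat w) * Q + Q * hat wd).trace = vee (Qᵀ - Q) ⬝ᵥ (wd - w) := by
  simp [Matrix.trace, Matrix.diag, Matrix.mul_apply, Fin.sum_univ_three, hat, vee,
    dotProduct, Matrix.vecMul, Matrix.vecHead, Matrix.vecTail, Function.comp]
  ring

lemma vee_Qdot (Q : Matrix (Fin 3) (Fin 3) ℝ) (w wd : Fin 3 → ℝ) :
    vee ((-(hat w) * Q + Q * hat wd)ᵀ - (-(hat w) * Q + Q * hat wd)) =
      (Q.trace • (1 : Matrix (Fin 3) (Fin 3) ℝ) - Q) *ᵥ w -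
        (Q.trace • (1 : Matrix (Fin 3) (Fin 3) ℝ) - Qᵀ) *ᵥ wd := by
  funext j; fin_cases j <;>
    simp [vee, hat, Matrix.mul_apply, mulVec, dotProduct, Fin.sum_univ_three,
      Matrix.trace, Matrix.diag, Matrix.one_apply, Matrix.vecMul, Matrix.vecHead,
      Matrix.vecTail, Function.comp] <;> ring

lemma adjugate_eq_poly (A : Matrix (Fin 3) (Fin 3) ℝ) :
    adjugate A = A * A - A.trace • A + ((A.trace ^ 2 - (A * A).trace) / 2) •
      (1 : Matrix (Fin 3) (Fin 3) ℝ) := by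
  rw [Matrix.adjugate_fin_three]
  ext i j
  fin_cases i <;> fin_cases j <;>
    simp [Matrix.mul_apply, Fin.sum_univ_three,
      Matrix.trace, Matrix.diag, Matrix.one_apply] <;> ring

lemma vecMulVec_mulVec' (a b v : Fin 3 → ℝ) :
    vecMulVec a b *ᵥ v = (b ⬝ᵥ v) • a := by
  funext i
  simp [vecMulVec_apply, mulVec, dotProduct, Fin.sum_univ_three, Pi.smul_apply,
    smul_eq_mul]
  ring

section
variable {Q : Matrix (Fin 3) (Fin 3) ℝ}

lemma adj_eq_transpose (hQ : Qᵀ * Q = 1) (hdet : Q.det = 1) : adjugate Q = Qᵀ := by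
  calc adjugate Q = (Qᵀ * Q) * adjugate Q := by rw [hQ, one_mul]
    _ = Qᵀ * (Q * adjugate Q) := by rw [Matrix.mul_assoc]
    _ = Qᵀ := by rw [Matrix.mul_adjugate, hdet, one_smul, mul_one]

lemma cayley_so3 (hQ : Qᵀ * Q = 1) (hdet : Q.det = 1) :
    Q * Q = Q.trace • Q - Q.trace • (1 : Matrix (Fin 3) (Fin 3) ℝ) + Qᵀ := by
  have h := (adj_eq_transpose hQ hdet).symm.trans (adjugate_eq_poly Q)
  set σ := (Q.trace ^ 2 - (Q * Q).trace) / 2 with hσ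
  have htr := congrArg Matrix.trace h
  simp [Matrix.trace_smul, Matrix.trace_sub, Matrix.trace_add, Matrix.trace_one,
    smul_eq_mul] at htr
  have hσtr : σ = Q.trace := by rw [hσ]; linarith
  rw [hσtr] at h
  rw [h]; abel

lemma fix_axis (hQ : Qᵀ * Q = 1) (hdet : Q.det = 1) :
    Q *ᵥ vee (Qᵀ - Q) = vee (Qᵀ - Q) := by
  have hQ' : Q * Qᵀ = 1 := mul_eq_one_comm.mp hQ
  have h1 : hat (Q *ᵥ vee (Qᵀ - Q)) * Q = Q * hat (vee (Qᵀ - Q)) := by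
    rw [hat_mulVec_mul, adj_eq_transpose hQ hdet, transpose_transpose]
  have h2 : hat (Q *ᵥ vee (Qᵀ - Q)) = Q * hat (vee (Qᵀ - Q)) * Qᵀ := by
    calc hat (Q *ᵥ vee (Qᵀ - Q)) = hat (Q *ᵥ vee (Qᵀ - Q)) * (Q * Qᵀ) := by
          rw [hQ', mul_one]
      _ = (hat (Q *ᵥ vee (Qᵀ - Q)) * Q) * Qᵀ := by rw [Matrix.mul_assoc]
      _ = Q * hat (vee (Qᵀ - Q)) * Qᵀ := by rw [h1]
  have h3 : Q * hat (vee (Qᵀ - Q)) * Qᵀ = hat (vee (Qᵀ - Q)) := by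
    rw [hat_vee_sub]
    calc Q * (Qᵀ - Q) * Qᵀ = Q * Qᵀ * Qᵀ - Q * (Q * Qᵀ) := by
          rw [Matrix.mul_sub, Matrix.sub_mul, Matrix.mul_assoc, Matrix.mul_assoc]
      _ = Qᵀ - Q := by rw [hQ', one_mul, mul_one]
  have h4 := h2.trans h3
  have := congrArg vee h4
  rwa [vee_hat, vee_hat] at this

end

section
variable {Q : Matrix (Fin 3) (Fin 3) ℝ}

lemma key0 (hQ : Qᵀ * Q = 1) (hdet : Q.det = 1) (w wd : Fin 3 → ℝ) :
    (vee (Qᵀ - Q) ⬝ᵥ (w - wd)) • vee (Qᵀ - Q) +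
      (2 * (1 + Q.trace)) • ((Q.trace • (1 : Matrix (Fin 3) (Fin 3) ℝ) - Q) *ᵥ w -
        (Q.trace • (1 : Matrix (Fin 3) (Fin 3) ℝ) - Qᵀ) *ᵥ wd) =
    (vee (Qᵀ - Q) ⬝ᵥ (w - Q *ᵥ wd)) • vee (Qᵀ - Q) +
      (2 * (1 + Q.trace)) • (Q.trace • (w - Q *ᵥ wd) - Q *ᵥ (w - Q *ᵥ wd)) := by
  have hu1 : Q *ᵥ vee (Qᵀ - Q) = vee (Qᵀ - Q) := fix_axis hQ hdet
  have hCH := cayley_so3 hQ hdet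
  set u := vee (Qᵀ - Q) with hu
  have hu2 : u ⬝ᵥ (Q *ᵥ wd) = u ⬝ᵥ wd := by
    have h3 : Qᵀ *ᵥ u = u := by
      conv_lhs => rw [← hu1, Matrix.mulVec_mulVec, hQ, Matrix.one_mulVec]
    rw [Matrix.dotProduct_mulVec, ← Matrix.mulVec_transpose, h3]
  have hQQ : Q *ᵥ (Q *ᵥ wd) = Q.trace • (Q *ᵥ wd) - Q.trace • wd + Qᵀ *ᵥ wd := by
    rw [Matrix.mulVec_mulVec, hCH, Matrix.add_mulVec, Matrix.sub_mulVec,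
      Matrix.smul_mulVec, Matrix.smul_mulVec, Matrix.one_mulVec]
  simp only [Matrix.sub_mulVec, Matrix.smul_mulVec, Matrix.one_mulVec,
    Matrix.mulVec_sub, dotProduct_sub, hu2, hQQ]
  module

lemma key (hQ : Qᵀ * Q = 1) (hdet : Q.det = 1) (w wd : Fin 3 → ℝ) (s : ℝ)
    (hs : 0 < s) (hs2 : s ^ 2 = 1 + Q.trace) :
    (-(2 * ((vee (Qᵀ - Q) ⬝ᵥ (wd - w)) / (2 * s))) / (2 * s) ^ 2) • vee (Qᵀ - Q) +
      (1 / (2 * s)) • ((Q.trace • (1 : Matrix (Fin 3) (Fin 3) ℝ) - Q) *ᵥ w -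
        (Q.trace • (1 : Matrix (Fin 3) (Fin 3) ℝ) - Qᵀ) *ᵥ wd) =
    ((1 / (2 * s)) • (2 • vecMulVec ((1 / (2 * s)) • vee (Qᵀ - Q))
          ((1 / (2 * s)) • vee (Qᵀ - Q)) +
        Q.trace • (1 : Matrix (Fin 3) (Fin 3) ℝ) - Q)) *ᵥ (w - Q *ᵥ wd) := by
  have k0 := key0 hQ hdet w wd
  set u := vee (Qᵀ - Q) with hu
  have hs0 : s ≠ 0 := hs.ne'
  have hL : (-(2 * ((u ⬝ᵥ (wd - w)) / (2 * s))) / (2 * s) ^ 2) • u +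
      (1 / (2 * s)) • ((Q.trace • (1 : Matrix (Fin 3) (Fin 3) ℝ) - Q) *ᵥ w -
        (Q.trace • (1 : Matrix (Fin 3) (Fin 3) ℝ) - Qᵀ) *ᵥ wd) =
      (1 / (4 * s ^ 3)) • ((u ⬝ᵥ (w - wd)) • u +
      (2 * (1 + Q.trace)) • ((Q.trace • (1 : Matrix (Fin 3) (Fin 3) ℝ) - Q) *ᵥ w -
        (Q.trace • (1 : Matrix (Fin 3) (Fin 3) ℝ) - Qᵀ) *ᵥ wd)) := by
    rw [← hs2, show u ⬝ᵥ (wd - w) = -(u ⬝ᵥ (w - wd)) by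
      rw [dotProduct_sub, dotProduct_sub]; ring]
    match_scalars <;> field_simp <;> ring
  have hR : ((1 / (2 * s)) • (2 • vecMulVec ((1 / (2 * s)) • u) ((1 / (2 * s)) • u) +
        Q.trace • (1 : Matrix (Fin 3) (Fin 3) ℝ) - Q)) *ᵥ (w - Q *ᵥ wd) =
      (1 / (4 * s ^ 3)) • ((u ⬝ᵥ (w - Q *ᵥ wd)) • u +
      (2 * (1 + Q.trace)) • (Q.trace • (w - Q *ᵥ wd) - Q *ᵥ (w - Q *ᵥ wd))) := by
    rw [← hs2]
    simp only [two_smul, Matrix.smul_mulVec, Matrix.sub_mulVec,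
      Matrix.add_mulVec, Matrix.one_mulVec, vecMulVec_mulVec', smul_dotProduct,
      smul_smul, smul_add, smul_sub]
    match_scalars <;> field_simp <;> ring_nf <;> field_simp
  rw [hL, hR, k0]

end

lemma hasDerivAt_Ωtar
    (R Rd : ℝ → Matrix (Fin 3) (Fin 3) ℝ) (Ω Ωd Ω' Ωd' : ℝ → Fin 3 → ℝ)
    (P : Matrix (Fin 3) (Fin 3) ℝ)
    (hSO : ∀ t, (R t)ᵀ * R t = 1 ∧ (R t).det = 1)
    (hSOd : ∀ t, (Rd t)ᵀ * Rd t = 1 ∧ (Rd t).det = 1)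
    (hΩd : ∀ t i, HasDerivAt (fun s => Ωd s i) (Ωd' t i) t)
    (hR : ∀ t i j, HasDerivAt (fun s => R s i j) ((R t * hat (Ω t)) i j) t)
    (hRd : ∀ t i j, HasDerivAt (fun s => Rd s i j) ((Rd t * hat (Ωd t)) i j) t)
    (htr : ∀ t, -1 < ((Rd t)ᵀ * R t).trace) (t : ℝ) (i : Fin 3) :
    HasDerivAt (fun s => Ωtar P R Rd Ωd s i)
      ((-((hat (Ω t) * ((R t)ᵀ * Rd t)) *ᵥ Ωd t) + ((R t)ᵀ * Rd t) *ᵥ Ωd' t -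
        (P * β R Rd t) *ᵥ eΩ R Rd Ω Ωd t) i) t := by
  classical
  obtain ⟨hRo, hRdet⟩ := hSO t
  obtain ⟨hRdo, hRddet⟩ := hSOd t
  set Qm := (R t)ᵀ * Rd t with hQm
  set Q' := -(hat (Ω t)) * Qm + Qm * hat (Ωd t) with hQ'
  have hRo' : R t * (R t)ᵀ = 1 := mul_eq_one_comm.mp hRo
  have hQo : Qmᵀ * Qm = 1 := by
    rw [hQm, Matrix.transpose_mul, Matrix.transpose_transpose]
    calc (Rd t)ᵀ * R t * ((R t)ᵀ * Rd t) = (Rd t)ᵀ * (R t * (R t)ᵀ) * Rd t := by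
          rw [Matrix.mul_assoc, Matrix.mul_assoc, Matrix.mul_assoc]
      _ = 1 := by rw [hRo', mul_one, hRdo]
  have hQdet : Qm.det = 1 := by
    rw [hQm, Matrix.det_mul, Matrix.det_transpose, hRdet, hRddet, mul_one]
  have htp : (Rd t)ᵀ * R t = Qmᵀ := by
    rw [hQm, Matrix.transpose_mul, Matrix.transpose_transpose]
  have hc : (0:ℝ) < 1 + ((Rd t)ᵀ * R t).trace := by linarith [htr t]
  set sst := Real.sqrt (1 + ((Rd t)ᵀ * R t).trace) with hst
  have hspos : 0 < sst := Real.sqrt_pos.mpr hc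
  have hs2 : sst ^ 2 = 1 + ((Rd t)ᵀ * R t).trace := Real.sq_sqrt hc.le
  -- derivatives of matrix products
  have hQd : ∀ a b : Fin 3, HasDerivAt (fun s => ((R s)ᵀ * Rd s) a b) (Q' a b) t := by
    intro a b
    have h1 : HasDerivAt (fun s => ∑ k : Fin 3, R s k a * Rd s k b)
        (∑ k : Fin 3, ((R t * hat (Ω t)) k a * Rd t k b +
          R t k a * (Rd t * hat (Ωd t)) k b)) t :=
      HasDerivAt.fun_sum fun k _ => (hR t k a).mul (hRd t k b)
    have hfun : (fun s => ((R s)ᵀ * Rd s) a b) =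
        fun s => ∑ k : Fin 3, R s k a * Rd s k b := by
      funext s; simp [Matrix.mul_apply, Matrix.transpose_apply]
    have hmat : (R t * hat (Ω t))ᵀ * Rd t + (R t)ᵀ * (Rd t * hat (Ωd t)) = Q' := by
      rw [hQ', hQm]
      simp only [Matrix.transpose_mul, hat_transpose, Matrix.neg_mul,
        Matrix.mul_neg, Matrix.mul_assoc]
    have hval : Q' a b = ∑ k : Fin 3, ((R t * hat (Ω t)) k a * Rd t k b +
        R t k a * (Rd t * hat (Ωd t)) k b) := by
      rw [← hmat]
      simp [Matrix.mul_apply, Matrix.transpose_apply, Matrix.add_apply,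
        Finset.sum_add_distrib, mul_comm]
    rw [hfun, hval]; exact h1
  have hQTd : ∀ a b : Fin 3, HasDerivAt (fun s => ((Rd s)ᵀ * R s) a b) (Q'ᵀ a b) t := by
    intro a b
    have h1 : HasDerivAt (fun s => ∑ k : Fin 3, Rd s k a * R s k b)
        (∑ k : Fin 3, ((Rd t * hat (Ωd t)) k a * R t k b +
          Rd t k a * (R t * hat (Ω t)) k b)) t :=
      HasDerivAt.fun_sum fun k _ => (hRd t k a).mul (hR t k b)
    have hfun : (fun s => ((Rd s)ᵀ * R s) a b) =
        fun s => ∑ k : Fin 3, Rd s k a * R s k b := by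
      funext s; simp [Matrix.mul_apply, Matrix.transpose_apply]
    have hmat : (Rd t * hat (Ωd t))ᵀ * R t + (Rd t)ᵀ * (R t * hat (Ω t)) = Q'ᵀ := by
      rw [hQ', hQm]
      simp only [Matrix.transpose_add, Matrix.transpose_mul, Matrix.transpose_neg,
        Matrix.transpose_transpose, hat_transpose, Matrix.neg_mul, Matrix.mul_neg,
        neg_neg, Matrix.mul_assoc]
      abel
    have hval : Q'ᵀ a b = ∑ k : Fin 3, ((Rd t * hat (Ωd t)) k a * R t k b +
        Rd t k a * (R t * hat (Ω t)) k b) := by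
      rw [← hmat]
      simp [Matrix.mul_apply, Matrix.transpose_apply, Matrix.add_apply,
        Finset.sum_add_distrib, mul_comm]
    rw [hfun, hval]; exact h1
  -- derivative of the trace and sqrt
  have htrd : HasDerivAt (fun s => 1 + ((Rd s)ᵀ * R s).trace) (Q'ᵀ.trace) t := by
    have h1 : HasDerivAt (fun s => ∑ k : Fin 3, ((Rd s)ᵀ * R s) k k)
        (∑ k : Fin 3, Q'ᵀ k k) t := HasDerivAt.fun_sum fun k _ => hQTd k k
    have hfun : (fun s => 1 + ((Rd s)ᵀ * R s).trace) =
        fun s => 1 + ∑ k : Fin 3, ((Rd s)ᵀ * R s) k k := by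
      funext s; simp [Matrix.trace, Matrix.diag]
    have hval : Q'ᵀ.trace = ∑ k : Fin 3, Q'ᵀ k k := by simp [Matrix.trace, Matrix.diag]
    rw [hfun, hval]; exact h1.const_add 1
  have hsqrtd : HasDerivAt (fun s => Real.sqrt (1 + ((Rd s)ᵀ * R s).trace))
      (Q'ᵀ.trace / (2 * sst)) t := htrd.sqrt hc.ne'
  have hfd : HasDerivAt (fun s => 1 / (2 * Real.sqrt (1 + ((Rd s)ᵀ * R s).trace)))
      (-(2 * (Q'ᵀ.trace / (2 * sst))) / (2 * sst) ^ 2) t := by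
    have h2 := (hsqrtd.const_mul 2).inv (by positivity)
    rw [show (fun s => 1 / (2 * Real.sqrt (1 + ((Rd s)ᵀ * R s).trace))) =
        (fun y => 2 * Real.sqrt (1 + ((Rd y)ᵀ * R y).trace))⁻¹ from funext fun s => one_div _]
    exact h2
  -- derivative of vee entries
  have hvee : ∀ j : Fin 3, HasDerivAt (fun s => vee ((Rd s)ᵀ * R s - (R s)ᵀ * Rd s) j)
      (vee (Q'ᵀ - Q') j) t := by
    intro j
    have hv : ∀ (M : Matrix (Fin 3) (Fin 3) ℝ) (j : Fin 3),
        vee M j = M (![2,0,1] j) (![1,2,0] j) := by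
      intro M j; fin_cases j <;> rfl
    have h1 := (hQTd (![2,0,1] j) (![1,2,0] j)).sub (hQd (![2,0,1] j) (![1,2,0] j))
    have hfun : (fun s => vee ((Rd s)ᵀ * R s - (R s)ᵀ * Rd s) j) =
        fun s => ((Rd s)ᵀ * R s) (![2,0,1] j) (![1,2,0] j) -
          ((R s)ᵀ * Rd s) (![2,0,1] j) (![1,2,0] j) := by
      funext s; rw [hv, Matrix.sub_apply]
    rw [hfun, hv _ j, Matrix.sub_apply]; exact h1
  -- derivative of eR components
  have heRd : ∀ j : Fin 3, HasDerivAt (fun s => eR R Rd s j)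
      ((-(2 * (Q'ᵀ.trace / (2 * sst))) / (2 * sst) ^ 2) *
          vee ((Rd t)ᵀ * R t - (R t)ᵀ * Rd t) j +
        (1 / (2 * sst)) * vee (Q'ᵀ - Q') j) t := by
    intro j
    have hfun : (fun s => eR R Rd s j) = fun s =>
        (1 / (2 * Real.sqrt (1 + ((Rd s)ᵀ * R s).trace))) *
          vee ((Rd s)ᵀ * R s - (R s)ᵀ * Rd s) j := by
      funext s; simp [eR, Pi.smul_apply, smul_eq_mul]
    rw [hfun]
    have := hfd.mul (hvee j)
    exact this
  -- the key identity, in the shape produced by the calculus above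
  have hkeyvec : (fun j => (-(2 * (Q'ᵀ.trace / (2 * sst))) / (2 * sst) ^ 2) *
          vee ((Rd t)ᵀ * R t - (R t)ᵀ * Rd t) j +
        (1 / (2 * sst)) * vee (Q'ᵀ - Q') j) = β R Rd t *ᵥ eΩ R Rd Ω Ωd t := by
    have htr' : Q'ᵀ.trace = vee (Qmᵀ - Qm) ⬝ᵥ (Ωd t - Ω t) := by
      rw [Matrix.trace_transpose, hQ']; exact trace_hat_comb Qm (Ω t) (Ωd t)
    have hu' : vee (Q'ᵀ - Q') =
        (Qm.trace • (1 : Matrix (Fin 3) (Fin 3) ℝ) - Qm) *ᵥ Ω t -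
          (Qm.trace • (1 : Matrix (Fin 3) (Fin 3) ℝ) - Qmᵀ) *ᵥ Ωd t := by
      rw [hQ']; exact vee_Qdot Qm (Ω t) (Ωd t)
    have hs2' : sst ^ 2 = 1 + Qm.trace := by rw [hs2, htp, Matrix.trace_transpose]
    have hK := key hQo hQdet (Ω t) (Ωd t) sst hspos hs2'
    have hβ : β R Rd t = (1 / (2 * sst)) •
        (2 • vecMulVec ((1 / (2 * sst)) • vee (Qmᵀ - Qm))
            ((1 / (2 * sst)) • vee (Qmᵀ - Qm)) +
          Qm.trace • (1 : Matrix (Fin 3) (Fin 3) ℝ) - Qm) := by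
      rw [β, eR, ← hst, htp, ← hQm]
    have heΩ : eΩ R Rd Ω Ωd t = Ω t - Qm *ᵥ Ωd t := by rw [eΩ, ← hQm]
    funext j
    rw [htp, htr', hu', hβ, heΩ]
    have := congrFun hK j
    simpa [Pi.add_apply, Pi.smul_apply, Pi.sub_apply, smul_eq_mul] using this
  have heRd' : ∀ j : Fin 3, HasDerivAt (fun s => eR R Rd s j)
      ((β R Rd t *ᵥ eΩ R Rd Ω Ωd t) j) t := by
    intro j
    have := heRd j
    rwa [show (-(2 * (Q'ᵀ.trace / (2 * sst))) / (2 * sst) ^ 2) *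
          vee ((Rd t)ᵀ * R t - (R t)ᵀ * Rd t) j +
        (1 / (2 * sst)) * vee (Q'ᵀ - Q') j = (β R Rd t *ᵥ eΩ R Rd Ω Ωd t) j from
      congrFun hkeyvec j] at this
  -- assemble Ωtar
  have hfun : (fun s => Ωtar P R Rd Ωd s i) = fun s =>
      -(∑ j : Fin 3, P i j * eR R Rd s j) +
        ∑ j : Fin 3, ((R s)ᵀ * Rd s) i j * Ωd s j := by
    funext s; simp [Ωtar, Matrix.mulVec, dotProduct]
  have hmain : HasDerivAt (fun s => Ωtar P R Rd Ωd s i)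
      (-(∑ j : Fin 3, P i j * (β R Rd t *ᵥ eΩ R Rd Ω Ωd t) j) +
        ∑ j : Fin 3, (Q' i j * Ωd t j + Qm i j * Ωd' t j)) t := by
    rw [hfun]
    exact ((HasDerivAt.fun_sum fun j _ => (heRd' j).const_mul (P i j)).neg).add
      (HasDerivAt.fun_sum fun j _ => (hQd i j).mul (hΩd t j))
  -- identify the derivative value
  have hval : -(∑ j : Fin 3, P i j * (β R Rd t *ᵥ eΩ R Rd Ω Ωd t) j) +
        ∑ j : Fin 3, (Q' i j * Ωd t j + Qm i j * Ωd' t j) =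
      (-((hat (Ω t) * Qm) *ᵥ Ωd t) + Qm *ᵥ Ωd' t -
        (P * β R Rd t) *ᵥ eΩ R Rd Ω Ωd t) i := by
    have h3 : Q' *ᵥ Ωd t = -((hat (Ω t) * Qm) *ᵥ Ωd t) := by
      rw [hQ', Matrix.add_mulVec, Matrix.neg_mul, Matrix.neg_mulVec,
        show (Qm * hat (Ωd t)) *ᵥ Ωd t = Qm *ᵥ (hat (Ωd t) *ᵥ Ωd t) from
          (Matrix.mulVec_mulVec _ _ _).symm,
        hat_mulVec_self, Matrix.mulVec_zero, add_zero]
    have h4 : ∑ j : Fin 3, P i j * (β R Rd t *ᵥ eΩ R Rd Ω Ωd t) j =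
        ((P * β R Rd t) *ᵥ eΩ R Rd Ω Ωd t) i := by
      rw [← Matrix.mulVec_mulVec]
      simp [Matrix.mulVec, dotProduct]
    have h2 : ∑ j : Fin 3, (Q' i j * Ωd t j + Qm i j * Ωd' t j) =
        (Q' *ᵥ Ωd t) i + (Qm *ᵥ Ωd' t) i := by
      simp [Matrix.mulVec, dotProduct, Finset.sum_add_distrib]
    rw [h2, h3, h4]
    simp only [Pi.add_apply, Pi.sub_apply, Pi.neg_apply]
    ring
  rw [← hval]; exact hmain

/-- Differentiability of `Ω_tar` with the stated derivative, and the linear tracking-error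
dynamics `J e' = -F e` under the backstepping control law `q`. -/
theorem backstepping_error_dynamics
    (R Rd : ℝ → Matrix (Fin 3) (Fin 3) ℝ) (Ω Ωd Ω' Ωd' : ℝ → Fin 3 → ℝ)
    (P F J : Matrix (Fin 3) (Fin 3) ℝ) (hJ : IsUnit J)
    (hSO : ∀ t, (R t)ᵀ * R t = 1 ∧ (R t).det = 1)
    (hSOd : ∀ t, (Rd t)ᵀ * Rd t = 1 ∧ (Rd t).det = 1)
    (hΩ : ∀ t i, HasDerivAt (fun s => Ω s i) (Ω' t i) t)
    (hΩd : ∀ t i, HasDerivAt (fun s => Ωd s i) (Ωd' t i) t)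
    (hR : ∀ t i j, HasDerivAt (fun s => R s i j) ((R t * hat (Ω t)) i j) t)
    (hRd : ∀ t i j, HasDerivAt (fun s => Rd s i j) ((Rd t * hat (Ωd t)) i j) t)
    (htr : ∀ t, -1 < ((Rd t)ᵀ * R t).trace) :
    (∀ t i, HasDerivAt (fun s => Ωtar P R Rd Ωd s i)
        ((-((hat (Ω t) * ((R t)ᵀ * Rd t)) *ᵥ Ωd t) + ((R t)ᵀ * Rd t) *ᵥ Ωd' t -
          (P * β R Rd t) *ᵥ eΩ R Rd Ω Ωd t) i) t) ∧
    ((∀ t, J *ᵥ Ω' t =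
        -(crossProduct (Ω t) (J *ᵥ Ω t)) +
          (crossProduct (Ω t) (J *ᵥ Ω t) +
            J *ᵥ (fun i => deriv (fun s => Ωtar P R Rd Ωd s i) t) -
            F *ᵥ (Ω t - Ωtar P R Rd Ωd t))) →
      ∀ t, J *ᵥ (fun i => deriv (fun s => Ω s i - Ωtar P R Rd Ωd s i) t) =
        -(F *ᵥ (Ω t - Ωtar P R Rd Ωd t))) := by
  have hder := fun t i => hasDerivAt_Ωtar R Rd Ω Ωd Ω' Ωd' P hSO hSOd hΩd hR hRd htr t i
  refine ⟨hder, ?_⟩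
  intro hq t
  set V := -((hat (Ω t) * ((R t)ᵀ * Rd t)) *ᵥ Ωd t) + ((R t)ᵀ * Rd t) *ᵥ Ωd' t -
      (P * β R Rd t) *ᵥ eΩ R Rd Ω Ωd t with hV
  have hDtar : (fun i => deriv (fun s => Ωtar P R Rd Ωd s i) t) = V :=
    funext fun i => (hder t i).deriv
  have hE : (fun i => deriv (fun s => Ω s i - Ωtar P R Rd Ωd s i) t) = Ω' t - V :=
    funext fun i => by
      have h := ((hΩ t i).sub (hder t i)).deriv
      exact h
  rw [hE, Matrix.mulVec_sub]
  have hq' := hq t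
  rw [hDtar] at hq'
  rw [hq']
  abel
end
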